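/- If f is analytic on an open set containing a compact interval [0, Λ] ⊂ ℝ and is bounded there, then for each n there exists a rational function r_n of degree at most n (ratio of polynomials of degrees ≤ n+1 and ≤ n) with sup_{λ ∈ [0,Λ]} |f(λ) − r_n(λ)| ≤ C q^n for some constants C > 0 and 0 < q < 1 independent of n; in particular polynomials of degree n already achieve this bound, so rational functions do too. -/

import Mathlib

open Complex Polynomial

lemma chebT_natDegree_le (n : ℕ) : (Polynomial.Chebyshev.T ℂ n).natDegree ≤ n := by
  induction n using Nat.twoStepInduction with
  | zero => simp [Polynomial.Chebyshev.T_zero]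
  | one => simpa [Polynomial.Chebyshev.T_one] using Polynomial.natDegree_X_le
  | more n h1 h2 =>
    have : ((n + 2 : ℕ) : ℤ) = (n : ℤ) + 2 := by push_cast; ring
    rw [this, Polynomial.Chebyshev.T_add_two]
    refine le_trans (Polynomial.natDegree_sub_le _ _) ?_
    have hb : (2 * Polynomial.X * Polynomial.Chebyshev.T ℂ ((n : ℤ) + 1)).natDegree ≤ n + 2 := by
      refine le_trans (Polynomial.natDegree_mul_le) ?_
      have h2X : (2 * (Polynomial.X : ℂ[X])).natDegree ≤ 1 :=
        le_trans (Polynomial.natDegree_mul_le) (by simp)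
      have : ((n : ℤ) + 1) = ((n + 1 : ℕ) : ℤ) := by push_cast; ring
      rw [this]
      omega
    have hc : (Polynomial.Chebyshev.T ℂ (n : ℤ)).natDegree ≤ n + 2 := le_trans h1 (by omega)
    simp [max_le_iff]
    omega

lemma contour_shift (Φ : ℂ → ℂ) (η : ℝ)
    (hΦ : ∀ z : ℂ, |z.im| ≤ |η| → DifferentiableAt ℂ Φ z)
    (hper : ∀ z, Φ (z + 2 * Real.pi) = Φ z) :
    (∫ x in (0:ℝ)..(2*Real.pi), Φ (x + η * Complex.I)) = ∫ x in (0:ℝ)..(2*Real.pi), Φ x := by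
  set w : ℂ := ⟨2 * Real.pi, η⟩ with hw
  have hre : w.re = 2 * Real.pi := rfl
  have him : w.im = η := rfl
  have hdiff : DifferentiableOn ℂ Φ
      (Set.uIcc ((0:ℂ)).re w.re ×ℂ Set.uIcc ((0:ℂ)).im w.im) := by
    intro u hu
    rw [Complex.mem_reProdIm] at hu
    refine (hΦ u ?_).differentiableWithinAt
    have h2 := hu.2
    rw [him] at h2
    simp only [Complex.zero_im] at h2
    rcases le_total 0 η with hη | hη
    · rw [Set.uIcc_of_le hη] at h2
      rw [_root_.abs_of_nonneg hη]
      exact abs_le.mpr ⟨by linarith [h2.1], h2.2⟩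
    · rw [Set.uIcc_of_ge hη] at h2
      rw [_root_.abs_of_nonpos hη]
      exact abs_le.mpr ⟨by linarith [h2.1], by linarith [h2.2]⟩
  have h := Complex.integral_boundary_rect_eq_zero_of_differentiableOn Φ 0 w hdiff
  rw [hre, him] at h
  simp only [Complex.zero_re, Complex.zero_im] at h
  have hvert : (∫ y in (0:ℝ)..η, Φ (((2:ℝ) * Real.pi : ℝ) + y * Complex.I))
      = ∫ y in (0:ℝ)..η, Φ (((0:ℝ):ℂ) + y * Complex.I) := by
    refine intervalIntegral.integral_congr fun y _ => ?_
    have : (((2:ℝ) * Real.pi : ℝ) : ℂ) + y * Complex.I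
        = (((0:ℝ):ℂ) + y * Complex.I) + 2 * Real.pi := by push_cast; ring
    rw [this, hper]
  rw [hvert] at h
  have h' : (∫ x in (0:ℝ)..2*Real.pi, Φ (x + (0:ℝ) * Complex.I))
      - (∫ x in (0:ℝ)..2*Real.pi, Φ (x + η * Complex.I)) = 0 := by
    linear_combination h
  have hzero : (∫ x in (0:ℝ)..2*Real.pi, Φ (x + (0:ℝ) * Complex.I))
      = ∫ x in (0:ℝ)..2*Real.pi, Φ x := by
    refine intervalIntegral.integral_congr fun x _ => ?_
    norm_num
  rw [hzero] at h'
  linear_combination -h'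

/-- A function analytic and bounded on an open neighborhood of the compact interval
`[0, Λ]` admits polynomial (hence rational) approximants of degree `≤ n` converging
geometrically, i.e. with sup-norm error `≤ C qⁿ` for some `C > 0` and `0 < q < 1`
independent of `n`. -/
theorem analytic_geometric_polynomial_approximation (Λ : ℝ) (hΛ : 0 < Λ)
    (U : Set ℂ) (hU : IsOpen U)
    (hsub : ∀ x ∈ Set.Icc (0 : ℝ) Λ, (x : ℂ) ∈ U)
    (f : ℂ → ℂ) (hf : ∀ z ∈ U, AnalyticAt ℂ f z)
    (hbdd : ∃ Cb : ℝ, ∀ z ∈ U, ‖f z‖ ≤ Cb) :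
    ∃ C > (0 : ℝ), ∃ q ∈ Set.Ioo (0 : ℝ) 1, ∀ n : ℕ, ∃ p : Polynomial ℂ,
      p.natDegree ≤ n ∧ ∀ x ∈ Set.Icc (0 : ℝ) Λ, ‖f (x : ℂ) - p.eval (x : ℂ)‖ ≤ C * q ^ n := by
  obtain ⟨Cb, hCb⟩ := hbdd
  have hπ := Real.pi_pos
  set c : ℝ := Λ / 2 with hc
  have hcpos : 0 < c := by positivity
  set Ψ : ℂ → ℂ := fun z => (c : ℂ) + (c : ℂ) * Complex.cos z with hΨ
  have hΨcont : Continuous Ψ := by fun_prop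
  -- real points map into [0, Λ] hence into U
  have hreal : ∀ t : ℝ, Ψ (t : ℂ) ∈ U := by
    intro t
    have : Ψ (t : ℂ) = ((c + c * Real.cos t : ℝ) : ℂ) := by
      simp [hΨ, Complex.ofReal_cos]
    rw [this]
    refine hsub _ ⟨?_, ?_⟩
    · nlinarith [Real.neg_one_le_cos t]
    · nlinarith [Real.cos_le_one t]
  -- find a strip mapping into U
  obtain ⟨η, hηpos, hstrip⟩ : ∃ η > (0:ℝ), ∀ z : ℂ, |z.im| ≤ η → Ψ z ∈ U := by
    have hK : IsCompact ((fun t : ℝ => (t : ℂ)) '' Set.Icc 0 (2 * Real.pi)) :=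
      (isCompact_Icc).image Complex.continuous_ofReal
    have hKV : (fun t : ℝ => (t : ℂ)) '' Set.Icc 0 (2 * Real.pi) ⊆ Ψ ⁻¹' U := by
      rintro z ⟨t, _, rfl⟩
      exact hreal t
    obtain ⟨δ, hδ, hth⟩ := hK.exists_thickening_subset_open (hU.preimage hΨcont) hKV
    refine ⟨δ / 2, by positivity, ?_⟩
    intro z hz
    set m : ℤ := ⌊z.re / (2 * Real.pi)⌋ with hm
    set z' : ℂ := z - (m : ℂ) * (2 * Real.pi) with hz'
    have him' : z'.im = z.im := by simp [hz']
    have hre' : z'.re = z.re - m * (2 * Real.pi) := by simp [hz']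
    have hfl1 : (m : ℝ) ≤ z.re / (2 * Real.pi) := Int.floor_le _
    have hfl2 : z.re / (2 * Real.pi) < m + 1 := Int.lt_floor_add_one _
    have h0le : 0 ≤ z'.re := by
      rw [hre']
      have := mul_le_mul_of_nonneg_right hfl1 (by positivity : (0:ℝ) ≤ 2 * Real.pi)
      rw [div_mul_cancel₀] at this
      · linarith
      · positivity
    have hlt : z'.re < 2 * Real.pi := by
      rw [hre']
      have := mul_lt_mul_of_pos_right hfl2 (by positivity : (0:ℝ) < 2 * Real.pi)
      rw [div_mul_cancel₀] at this
      · nlinarith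
      · positivity
    have hz'mem : z' ∈ Metric.thickening δ ((fun t : ℝ => (t : ℂ)) '' Set.Icc 0 (2 * Real.pi)) := by
      rw [Metric.mem_thickening_iff]
      refine ⟨(z'.re : ℂ), ⟨z'.re, ⟨h0le, hlt.le⟩, rfl⟩, ?_⟩
      have hd : z' - (z'.re : ℂ) = (z'.im : ℂ) * Complex.I := by
        apply Complex.ext <;> simp
      rw [Complex.dist_eq, hd]
      rw [norm_mul, Complex.norm_I, Complex.norm_real, Real.norm_eq_abs, mul_one, him']
      calc |z.im| ≤ δ / 2 := hz
        _ < δ := by linarith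
    have hΨz' : Ψ z' ∈ U := hth hz'mem
    have : Ψ z = Ψ z' := by
      simp only [hΨ]
      have hcos : Complex.cos z' = Complex.cos z := by
        rw [hz']
        exact Complex.cos_periodic.sub_int_mul_eq m
      rw [hcos]
    rwa [this]
  -- the conjugated function and its properties
  set F : ℂ → ℂ := fun z => f (Ψ z) with hFdef
  have hFb : ∀ z : ℂ, |z.im| ≤ η → ‖F z‖ ≤ Cb := fun z hz => hCb _ (hstrip z hz)
  have hFdiff : ∀ z : ℂ, |z.im| ≤ η → DifferentiableAt ℂ F z := by
    intro z hz
    have hinner : DifferentiableAt ℂ Ψ z := by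
      simp only [hΨ]
      fun_prop
    exact ((hf _ (hstrip z hz)).differentiableAt.comp z hinner)
  have hFper : ∀ z, F (z + 2 * Real.pi) = F z := by
    intro z
    simp only [hFdef, hΨ]
    rw [Complex.cos_periodic z]
  -- the periodic real function
  set g : ℝ → ℂ := fun t => F (t : ℂ) with hgdef
  have hgcont : Continuous g := by
    rw [continuous_iff_continuousAt]
    intro t
    exact ((hFdiff (t : ℂ) (by simp; positivity)).continuousAt.comp
      Complex.continuous_ofReal.continuousAt)
  have hgper : Function.Periodic g (2 * Real.pi) := by
    intro t
    have : ((t + 2 * Real.pi : ℝ) : ℂ) = (t : ℂ) + 2 * Real.pi := by push_cast; ring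
    simp only [hgdef, this, hFper]
  haveI : Fact (0 < 2 * Real.pi) := ⟨by positivity⟩
  set hmap : C(AddCircle (2 * Real.pi), ℂ) :=
    ⟨hgper.lift, hgcont.quotient_liftOn' _⟩ with hhmap
  have hmapcoe : ∀ t : ℝ, hmap ((t : ℝ) : AddCircle (2 * Real.pi)) = g t := fun t =>
    hgper.lift_coe t
  set a : ℤ → ℂ := fun k => fourierCoeff (⇑hmap) k with ha
  set M : ℝ := max Cb 1 with hM
  have hMpos : (0:ℝ) < M := lt_of_lt_of_le one_pos (le_max_right _ _)
  set q : ℝ := Real.exp (-η) with hq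
  have hq0 : 0 < q := Real.exp_pos _
  have hq1 : q < 1 := Real.exp_lt_one_iff.mpr (by linarith)
  -- geometric decay of Fourier coefficients
  have hcoeff : ∀ k : ℤ, ‖a k‖ ≤ M * q ^ k.natAbs := by
    intro k
    set s : ℝ := if 0 ≤ k then -η else η with hs
    have habs : |s| = η := by
      rcases le_or_gt 0 k with hk | hk
      · rw [hs, if_pos hk, abs_neg, _root_.abs_of_nonneg hηpos.le]
      · rw [hs, if_neg (not_le.mpr hk), _root_.abs_of_nonneg hηpos.le]
    set Φ : ℂ → ℂ := fun z => Complex.exp (-Complex.I * k * z) * F z with hΦk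
    have hΦdiff : ∀ z : ℂ, |z.im| ≤ |s| → DifferentiableAt ℂ Φ z := by
      intro z hz
      rw [habs] at hz
      have h1 : DifferentiableAt ℂ (fun z : ℂ => Complex.exp (-Complex.I * k * z)) z := by
        fun_prop
      exact h1.mul (hFdiff z hz)
    have hΦper : ∀ z, Φ (z + 2 * Real.pi) = Φ z := by
      intro z
      simp only [hΦk]
      rw [hFper]
      congr 1
      have he : -Complex.I * k * (z + 2 * Real.pi)
          = -Complex.I * k * z + ((-k : ℤ) : ℂ) * (2 * Real.pi * Complex.I) := by
        push_cast; ring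
      rw [he, Complex.exp_add, Complex.exp_int_mul_two_pi_mul_I, mul_one]
    have hshift := contour_shift Φ s hΦdiff hΦper
    have hak : a k = (1 / (2 * Real.pi)) • ∫ x in (0:ℝ)..(2 * Real.pi), Φ x := by
      show fourierCoeff (⇑hmap) k = _
      rw [fourierCoeff_eq_intervalIntegral (⇑hmap) k 0]
      rw [zero_add]
      congr 1
      refine intervalIntegral.integral_congr fun x _ => ?_
      rw [show (⇑hmap) ((x : ℝ) : AddCircle (2 * Real.pi)) = g x from hmapcoe x]
      rw [fourier_coe_apply]
      simp only [hΦk, smul_eq_mul, hgdef]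
      congr 1
      congr 1
      have hπc : ((Real.pi : ℝ) : ℂ) ≠ 0 := by exact_mod_cast Real.pi_ne_zero
      push_cast
      field_simp
    have hqe : Real.exp ((k : ℝ) * s) = q ^ k.natAbs := by
      rcases le_or_gt 0 k with hk | hk
      · have hcast : ((k.natAbs : ℝ)) = (k : ℝ) := by
          rw [Nat.cast_natAbs]
          exact_mod_cast abs_of_nonneg hk
        rw [show s = -η from if_pos hk, hq, ← Real.exp_nat_mul, hcast]
      · have hcast : ((k.natAbs : ℝ)) = -(k : ℝ) := by
          rw [Nat.cast_natAbs]
          exact_mod_cast abs_of_nonpos hk.le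
        rw [show s = η from if_neg (not_le.mpr hk), hq, ← Real.exp_nat_mul, hcast]
        congr 1
        ring
    have hbound : ‖∫ x in (0:ℝ)..(2 * Real.pi), Φ ((x : ℂ) + s * Complex.I)‖
        ≤ (Cb * q ^ k.natAbs) * |2 * Real.pi - 0| := by
      apply intervalIntegral.norm_integral_le_of_norm_le_const
      intro x _
      have hxim : (((x : ℝ) : ℂ) + s * Complex.I).im = s := by simp
      have hFb' : ‖F ((x : ℂ) + s * Complex.I)‖ ≤ Cb := by
        apply hFb
        rw [hxim, habs]
      have harg : -Complex.I * k * (((x : ℝ) : ℂ) + s * Complex.I)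
          = (((k : ℝ) * s : ℝ) : ℂ) + ((-( (k:ℝ) * x) : ℝ) : ℂ) * Complex.I := by
        push_cast
        linear_combination (-(k:ℂ) * (s:ℂ)) * Complex.I_sq
      have hexp : ‖Complex.exp (-Complex.I * k * (((x : ℝ) : ℂ) + s * Complex.I))‖
          = Real.exp ((k : ℝ) * s) := by
        rw [harg, Complex.exp_add, norm_mul]
        rw [Complex.norm_exp, Complex.norm_exp]
        simp
      simp only [hΦk]
      rw [norm_mul, hexp, hqe]
      calc q ^ k.natAbs * ‖F ((x : ℂ) + s * Complex.I)‖
          ≤ q ^ k.natAbs * Cb := by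
            apply mul_le_mul_of_nonneg_left hFb' (by positivity)
        _ = Cb * q ^ k.natAbs := by ring
    rw [hak, ← hshift]
    rw [norm_smul]
    have h1 : ‖(1 / (2 * Real.pi) : ℝ)‖ = 1 / (2 * Real.pi) := by
      rw [Real.norm_eq_abs, abs_of_pos (by positivity)]
    rw [h1]
    calc 1 / (2 * Real.pi) * ‖∫ x in (0:ℝ)..(2 * Real.pi), Φ ((x : ℂ) + s * Complex.I)‖
        ≤ 1 / (2 * Real.pi) * ((Cb * q ^ k.natAbs) * |2 * Real.pi - 0|) := by
          apply mul_le_mul_of_nonneg_left hbound (by positivity)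
      _ = Cb * q ^ k.natAbs := by
          rw [sub_zero, abs_of_pos (by positivity)]
          field_simp
      _ ≤ M * q ^ k.natAbs := by
          apply mul_le_mul_of_nonneg_right (le_max_left _ _) (by positivity)
  -- summability of the Fourier coefficients
  have hgeo : Summable (fun i : ℕ => q ^ i) := summable_geometric_of_lt_one hq0.le hq1
  have hsummA : Summable (fun k : ℤ => M * q ^ k.natAbs) := by
    apply Summable.of_nat_of_neg_add_one
    · apply Summable.congr (hgeo.mul_left M)
      intro i
      simp
    · apply Summable.congr (hgeo.mul_left (M * q))
      intro i
      have hna : ((-(↑i + 1) : ℤ)).natAbs = i + 1 := by omega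
      rw [hna, pow_succ]
      ring
  have hsumm : Summable (fun k : ℤ => a k) :=
    Summable.of_norm_bounded hsummA hcoeff
  have hfou := has_pointwise_sum_fourier_series_of_summable (f := hmap) hsumm
  have hcne : ((c : ℝ) : ℂ) ≠ 0 := by exact_mod_cast hcpos.ne'
  have hcosb : ∀ r : ℝ, ‖Complex.cos ((r : ℝ) : ℂ)‖ ≤ 1 := by
    intro r
    rw [← Complex.ofReal_cos, Complex.norm_real, Real.norm_eq_abs]
    exact Real.abs_cos_le_one r
  have hfour : ∀ (kk : ℤ) (u : ℝ),
      (fourier kk ((u : ℝ) : AddCircle (2 * Real.pi)) : ℂ)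
        = Complex.exp (Complex.I * kk * u) := by
    intro kk u
    rw [fourier_coe_apply]
    congr 1
    have hπc : ((Real.pi : ℝ) : ℂ) ≠ 0 := by exact_mod_cast Real.pi_ne_zero
    push_cast
    field_simp
  have hq1' : (0:ℝ) < 1 - q := by linarith
  refine ⟨2 * M / (1 - q), by positivity, q, ⟨hq0, hq1⟩, ?_⟩
  intro n
  set Pm : ℕ → Polynomial ℂ := fun j =>
    (Polynomial.Chebyshev.T ℂ (j : ℤ)).comp
      (Polynomial.C ((c : ℂ))⁻¹ * Polynomial.X - 1) with hPm
  have hPdeg : ∀ j : ℕ, (Pm j).natDegree ≤ j := by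
    intro j
    refine le_trans (Polynomial.natDegree_comp_le) ?_
    have h1 : (Polynomial.C ((c : ℂ))⁻¹ * Polynomial.X - 1).natDegree ≤ 1 := by
      refine le_trans (Polynomial.natDegree_sub_le _ _) ?_
      rw [max_le_iff]
      constructor
      · exact le_trans (Polynomial.natDegree_C_mul_le _ _) (by simp)
      · simp
    calc (Polynomial.Chebyshev.T ℂ (j : ℤ)).natDegree
          * (Polynomial.C ((c : ℂ))⁻¹ * Polynomial.X - 1).natDegree
        ≤ j * 1 := Nat.mul_le_mul (chebT_natDegree_le j) h1
      _ = j := by ring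
  set p : Polynomial ℂ := ∑ m ∈ Finset.range n,
      (Polynomial.C (a (m : ℤ)) * Pm m + Polynomial.C (a (-((m : ℤ) + 1))) * Pm (m + 1)) with hp
  have hdeg : p.natDegree ≤ n := by
    apply Polynomial.natDegree_sum_le_of_forall_le
    intro m hm
    rw [Finset.mem_range] at hm
    refine le_trans (Polynomial.natDegree_add_le _ _) ?_
    rw [max_le_iff]
    constructor
    · exact le_trans (Polynomial.natDegree_C_mul_le _ _) (le_trans (hPdeg m) (by omega))
    · exact le_trans (Polynomial.natDegree_C_mul_le _ _) (le_trans (hPdeg (m+1)) (by omega))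
  refine ⟨p, hdeg, ?_⟩
  intro x hx
  -- parametrize x = c + c cos t
  set t : ℝ := Real.arccos ((x - c) / c) with ht
  have hb1 : -1 ≤ (x - c) / c := by
    rw [le_div_iff₀ hcpos]
    rw [hc] at *
    nlinarith [hx.1]
  have hb2 : (x - c) / c ≤ 1 := by
    rw [div_le_one hcpos]
    rw [hc] at *
    nlinarith [hx.2]
  have hcost : Real.cos t = (x - c) / c := Real.cos_arccos hb1 hb2
  have hxeq : ((x : ℝ) : ℂ) = (c : ℂ) + (c : ℂ) * Complex.cos ((t : ℝ) : ℂ) := by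
    rw [← Complex.ofReal_cos, hcost]
    push_cast
    field_simp
    ring
  have hΨt : Ψ ((t : ℝ) : ℂ) = (x : ℂ) := by rw [hΨ]; exact hxeq.symm
  have hfx1 : hmap (((t : ℝ) : AddCircle (2 * Real.pi))) = f (x : ℂ) := by
    rw [hmapcoe t]
    show f (Ψ _) = _
    rw [hΨt]
  have hfx2 : hmap ((((-t) : ℝ) : AddCircle (2 * Real.pi))) = f (x : ℂ) := by
    rw [hmapcoe (-t)]
    show f (Ψ _) = _
    have : Ψ (((-t : ℝ)) : ℂ) = Ψ ((t : ℝ) : ℂ) := by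
      simp only [hΨ]
      congr 1
      congr 1
      push_cast
      exact Complex.cos_neg _
    rw [this, hΨt]
  have S1 := hfou (((t : ℝ) : AddCircle (2 * Real.pi)))
  have S2 := hfou ((((-t) : ℝ) : AddCircle (2 * Real.pi)))
  rw [hfx1] at S1
  rw [hfx2] at S2
  have Savg := (S1.add S2).div_const 2
  have hfun : (fun k : ℤ => ((fourierCoeff (⇑hmap) k • (fourier k (((t : ℝ) : AddCircle (2 * Real.pi))) : ℂ))
        + (fourierCoeff (⇑hmap) k • (fourier k ((((-t) : ℝ) : AddCircle (2 * Real.pi))) : ℂ))) / 2)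
      = fun k : ℤ => a k * Complex.cos ((k : ℂ) * (t : ℝ)) := by
    funext kk
    rw [hfour kk t, hfour kk (-t)]
    simp only [smul_eq_mul]
    rw [show Complex.cos ((kk : ℂ) * ((t:ℝ):ℂ))
        = (Complex.exp (((kk : ℂ) * ((t:ℝ):ℂ)) * Complex.I)
          + Complex.exp (-((kk : ℂ) * ((t:ℝ):ℂ)) * Complex.I)) / 2 from rfl]
    push_cast
    ring_nf
    simp only [ha]
    ring
  have hS : HasSum (fun k : ℤ => a k * Complex.cos ((k : ℂ) * (t : ℝ))) (f (x : ℂ)) := by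
    have h2 : (f (x:ℂ) + f (x:ℂ)) / 2 = f (x:ℂ) := by ring
    rw [hfun, h2] at Savg
    exact Savg
  set d : ℕ → ℂ := fun m =>
    a (m : ℤ) * Complex.cos ((m : ℂ) * (t : ℝ))
      + a (-((m : ℤ) + 1)) * Complex.cos (((m : ℂ) + 1) * (t : ℝ)) with hd
  have hdsum : HasSum d (f (x : ℂ)) := by
    have h := hS.nat_add_neg_add_one
    have hfe : (fun m : ℕ => a (m : ℤ) * Complex.cos (((m : ℤ) : ℂ) * (t : ℝ))
        + a (-((m : ℤ) + 1)) * Complex.cos ((((-((m : ℤ) + 1)) : ℤ) : ℂ) * (t : ℝ))) = d := by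
      funext m
      rw [hd]
      congr 2
      push_cast
      rw [show (-((m:ℂ)+1)) * ((t:ℝ):ℂ) = -(((m:ℂ)+1) * ((t:ℝ):ℂ)) by ring]
      exact Complex.cos_neg _
    rw [← hfe]
    exact h
  have hcosj : ∀ j : ℕ, Complex.cos ((j : ℂ) * (t : ℝ)) = Complex.cos (((j * t : ℝ)) : ℂ) := by
    intro j
    congr 1
    push_cast
    ring
  have hdb : ∀ m : ℕ, ‖d m‖ ≤ 2 * M * q ^ m := by
    intro m
    rw [hd]
    have e1 : ‖a (m : ℤ) * Complex.cos ((m : ℂ) * (t : ℝ))‖ ≤ M * q ^ m := by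
      rw [norm_mul]
      calc ‖a (m : ℤ)‖ * ‖Complex.cos ((m : ℂ) * (t : ℝ))‖
          ≤ (M * q ^ (m : ℤ).natAbs) * 1 := by
            apply mul_le_mul (hcoeff _) ?_ (norm_nonneg _) (by positivity)
            rw [hcosj m]
            exact hcosb _
        _ = M * q ^ m := by rw [Int.natAbs_natCast, mul_one]
    have e2 : ‖a (-((m : ℤ) + 1)) * Complex.cos (((m : ℂ) + 1) * (t : ℝ))‖ ≤ M * q ^ m := by
      rw [norm_mul]
      have hna : ((-(↑m + 1) : ℤ)).natAbs = m + 1 := by omega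
      calc ‖a (-((m : ℤ) + 1))‖ * ‖Complex.cos (((m : ℂ) + 1) * (t : ℝ))‖
          ≤ (M * q ^ (m + 1)) * 1 := by
            apply mul_le_mul ?_ ?_ (norm_nonneg _) (by positivity)
            · rw [← hna]
              exact hcoeff _
            · rw [show ((m : ℂ) + 1) = ((m + 1 : ℕ) : ℂ) by push_cast; ring, hcosj (m+1)]
              exact hcosb _
        _ ≤ M * q ^ m := by
            rw [mul_one, pow_succ]
            calc M * (q ^ m * q) = (M * q ^ m) * q := by ring
              _ ≤ (M * q ^ m) * 1 := by
                  apply mul_le_mul_of_nonneg_left hq1.le (by positivity)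
              _ = M * q ^ m := mul_one _
    calc ‖_ + _‖ ≤ _ := norm_add_le _ _
      _ ≤ M * q ^ m + M * q ^ m := add_le_add e1 e2
      _ = 2 * M * q ^ m := by ring
  -- the polynomial matches the partial sum
  have hPeval : ∀ j : ℕ, (Pm j).eval (x : ℂ) = Complex.cos ((j : ℂ) * (t : ℝ)) := by
    intro j
    rw [hPm]
    rw [Polynomial.eval_comp]
    have hin : (Polynomial.C ((c : ℂ))⁻¹ * Polynomial.X - 1).eval (x : ℂ)
        = Complex.cos ((t : ℝ) : ℂ) := by
      simp only [Polynomial.eval_sub, Polynomial.eval_mul, Polynomial.eval_C,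
        Polynomial.eval_X, Polynomial.eval_one]
      rw [hxeq]
      field_simp
      ring
    rw [hin]
    have := Polynomial.Chebyshev.T_complex_cos ((t : ℝ) : ℂ) (j : ℤ)
    rw [this]
    norm_cast
  have hpeval : p.eval (x : ℂ) = ∑ m ∈ Finset.range n, d m := by
    rw [hp, Polynomial.eval_finset_sum]
    apply Finset.sum_congr rfl
    intro m _
    rw [Polynomial.eval_add, Polynomial.eval_mul, Polynomial.eval_mul,
      Polynomial.eval_C, Polynomial.eval_C, hPeval m, hPeval (m+1), hd]
    push_cast
    ring
  -- tail estimate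
  have hsummd : Summable d := hdsum.summable
  have htot := Summable.sum_add_tsum_nat_add (f := d) n hsummd
  have hbnd : ∀ i : ℕ, ‖d (i + n)‖ ≤ (2 * M * q ^ n) * q ^ i := by
    intro i
    calc ‖d (i + n)‖ ≤ 2 * M * q ^ (i + n) := hdb (i + n)
      _ = (2 * M * q ^ n) * q ^ i := by rw [pow_add]; ring
  have hsumb : Summable (fun i : ℕ => (2 * M * q ^ n) * q ^ i) :=
    hgeo.mul_left _
  have hsn : Summable (fun i : ℕ => ‖d (i + n)‖) :=
    Summable.of_nonneg_of_le (fun i => norm_nonneg _) hbnd hsumb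
  have herr : f (x : ℂ) - p.eval (x : ℂ) = ∑' i : ℕ, d (i + n) := by
    rw [hpeval, ← hdsum.tsum_eq, ← htot]
    ring
  rw [herr]
  calc ‖∑' i : ℕ, d (i + n)‖ ≤ ∑' i : ℕ, ‖d (i + n)‖ := norm_tsum_le_tsum_norm hsn
    _ ≤ ∑' i : ℕ, (2 * M * q ^ n) * q ^ i := Summable.tsum_le_tsum hbnd hsn hsumb
    _ = (2 * M * q ^ n) * (1 - q)⁻¹ := by
        rw [tsum_mul_left, tsum_geometric_of_lt_one hq0.le hq1]
    _ = 2 * M / (1 - q) * q ^ n := by rw [div_eq_mul_inv]; ring
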